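/- Let A be a unital C*-algebra, let a, g ∈ A with a ≥ 0 and 0 ≤ g ≤ 1, and let ε > 0. Then (a - ε)₊ is Cuntz subequivalent in M₂(A) to the diagonal element diag([(1-g)a(1-g) - ε]₊, g). -/

import Mathlib

open Filter Topology Matrix

/-- Cuntz subequivalence: `a ≾ b` iff there is a sequence `vₙ` with `vₙ b vₙ* → a`. -/
def CuntzSubequiv (A : Type*) [Mul A] [Star A] [TopologicalSpace A] (a b : A) : Prop :=
  ∃ v : ℕ → A, Tendsto (fun n => v n * b * star (v n)) atTop (𝓝 a)

/-- The cut-down `(a - ε)₊`, i.e. functional calculus of `a` with `λ ↦ max (λ - ε) 0`. -/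
noncomputable def cutDown {A : Type*} [CStarAlgebra A] (a : A) (ε : ℝ) : A :=
  cfc (fun t : ℝ => max (t - ε) 0) a

namespace CuntzAux

/-! ### Real-valued helper lemmas -/

private lemma rmax1 {δ : ℝ} (hδ : 0 < δ) (u : ℝ) : max (max u 0 - δ) 0 = max (u - δ) 0 := by
  rcases le_total u 0 with h | h
  · rw [max_eq_right h, max_eq_right (by linarith), max_eq_right (by linarith)]
  · rw [max_eq_left h]

private lemma sqrt_conj_eq {n m k : ℝ} (hn : 0 ≤ n) (hm : 0 < m) :
    Real.sqrt (n / m) * k * Real.sqrt (n / m) = (n / m) * k := by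
  have h : Real.sqrt (n / m) * k * Real.sqrt (n / m)
      = Real.sqrt (n / m) * Real.sqrt (n / m) * k := by ring
  rw [h, Real.mul_self_sqrt (by positivity)]

private lemma rid1 {ε δ : ℝ} (hδ : 0 < δ) (t : ℝ) :
    Real.sqrt (max (t - ε - δ) 0 / max (t - ε) δ) * (t - ε) *
      Real.sqrt (max (t - ε - δ) 0 / max (t - ε) δ) = max (t - ε - δ) 0 := by
  have hm : 0 < max (t - ε) δ := lt_of_lt_of_le hδ (le_max_right _ _)
  rw [sqrt_conj_eq (le_max_right _ _) hm]
  rcases le_total (t - ε - δ) 0 with h | h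
  · rw [max_eq_right h]; simp
  · have h1 : max (t - ε) δ = t - ε := max_eq_left (by linarith)
    rw [max_eq_left h, h1, div_mul_cancel₀ _ (by intro h'; linarith [h' ▸ h] : t - ε ≠ 0)]

private lemma rid2 {ε δ : ℝ} (hε : 0 < ε) (hδ : 0 < δ) (t : ℝ) :
    Real.sqrt (max (t - ε - δ) 0 / max (t * (t - ε)) ((ε + δ) * δ)) * (t * t - ε * t) *
      Real.sqrt (max (t - ε - δ) 0 / max (t * (t - ε)) ((ε + δ) * δ)) = max (t - ε - δ) 0 := by
  have hm : 0 < max (t * (t - ε)) ((ε + δ) * δ) :=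
    lt_of_lt_of_le (by positivity) (le_max_right _ _)
  rw [sqrt_conj_eq (le_max_right _ _) hm]
  rcases le_total (t - ε - δ) 0 with h | h
  · rw [max_eq_right h]; simp
  · have ht : ε + δ ≤ t := by linarith
    have h1 : max (t * (t - ε)) ((ε + δ) * δ) = t * (t - ε) := by
      refine max_eq_left ?_
      have h2 : 0 < t := by linarith
      nlinarith
    have h3 : 0 < t * (t - ε) := by nlinarith
    have h4 : t * t - ε * t = t * (t - ε) := by ring
    rw [max_eq_left h, h1, h4, div_mul_cancel₀ _ h3.ne']

private lemma rid3 {δ : ℝ} (hδ : 0 < δ) (t : ℝ) :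
    Real.sqrt (max (t - δ) 0 / max (t * t) (δ * δ)) * (t * t) *
      Real.sqrt (max (t - δ) 0 / max (t * t) (δ * δ)) = max (t - δ) 0 := by
  have hm : 0 < max (t * t) (δ * δ) := lt_of_lt_of_le (by positivity) (le_max_right _ _)
  rw [sqrt_conj_eq (le_max_right _ _) hm]
  rcases le_total (t - δ) 0 with h | h
  · rw [max_eq_right h]; simp
  · have h1 : max (t * t) (δ * δ) = t * t := max_eq_left (by nlinarith)
    have h3 : 0 < t * t := by nlinarith
    rw [max_eq_left h, h1, div_mul_cancel₀ _ h3.ne']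

/-! ### C*-algebra helper lemmas -/

variable {A : Type*} [CStarAlgebra A] [PartialOrder A] [StarOrderedRing A]

lemma cutDown_nonneg (a : A) (ε : ℝ) : 0 ≤ cutDown a ε :=
  cfc_nonneg fun x _ => le_max_right _ _

lemma norm_cutDown_sub_le {a : A} (ha : 0 ≤ a) {δ : ℝ} (hδ : 0 ≤ δ) :
    ‖cutDown a δ - a‖ ≤ δ := by
  have hsa : IsSelfAdjoint a := .of_nonneg ha
  have h1 : cutDown a δ - a = cfc (fun t : ℝ => max (t - δ) 0 - t) a := by
    rw [cfc_sub (fun t : ℝ => max (t - δ) 0) (fun t : ℝ => t) a (by fun_prop) (by fun_prop),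
      cfc_id' ℝ a hsa]
    rfl
  rw [h1]
  refine norm_cfc_le hδ fun x hx => ?_
  have hx0 : 0 ≤ x := spectrum_nonneg_of_nonneg ha hx
  rw [Real.norm_eq_abs, abs_le]
  rcases le_total (x - δ) 0 with h | h
  · rw [max_eq_right h]; constructor <;> linarith
  · rw [max_eq_left h]; constructor <;> linarith

lemma sub_algebraMap_le_cutDown {a : A} (ha : IsSelfAdjoint a) (δ : ℝ) :
    a - algebraMap ℝ A δ ≤ cutDown a δ := by
  rw [← sub_nonneg]
  have h1 : cutDown a δ - (a - algebraMap ℝ A δ)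
      = cfc (fun t : ℝ => max (t - δ) 0 - (t - δ)) a := by
    rw [cfc_sub (fun t : ℝ => max (t - δ) 0) (fun t : ℝ => t - δ) a (by fun_prop) (by fun_prop),
      cfc_sub (fun t : ℝ => t) (fun _ : ℝ => δ) a (by fun_prop) (by fun_prop),
      cfc_id' ℝ a ha, cfc_const δ a ha]
    rfl
  rw [h1]
  exact cfc_nonneg fun x _ => sub_nonneg.2 (le_max_left _ _)

lemma cfc_conj_eq {y : A} (hy : IsSelfAdjoint y) (h k : ℝ → ℝ)
    (hh : Continuous h) (hk : Continuous k) :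
    cfc (fun t => h t * k t * h t) y = cfc h y * cfc k y * cfc h y := by
  rw [cfc_mul (fun t => h t * k t) h y (by fun_prop) (by fun_prop),
    cfc_mul h k y (by fun_prop) (by fun_prop)]

lemma cuntz_of_forall {c d : A}
    (H : ∀ η : ℝ, 0 < η → ∃ v : A, ‖v * d * star v - c‖ ≤ η) :
    CuntzSubequiv A c d := by
  choose v hv using fun n : ℕ => H (1 / ((n : ℝ) + 1)) (by positivity)
  refine ⟨v, ?_⟩
  rw [tendsto_iff_norm_sub_tendsto_zero]
  exact squeeze_zero (fun n => norm_nonneg _) hv tendsto_one_div_add_atTop_nhds_zero_nat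

lemma cuntz_forall {c d : A} (h : CuntzSubequiv A c d) (η : ℝ) (hη : 0 < η) :
    ∃ v : A, ‖v * d * star v - c‖ ≤ η := by
  obtain ⟨v, hv⟩ := h
  obtain ⟨n, hn⟩ := (hv.eventually (Metric.ball_mem_nhds c hη)).exists
  exact ⟨v n, le_of_lt (by simpa [dist_eq_norm] using hn)⟩

/-- If `0 ≤ c ≤ d` then `c ≾ d`. -/
lemma subequiv_of_le {c d : A} (hc : 0 ≤ c) (hcd : c ≤ d) : CuntzSubequiv A c d := by
  have hd : 0 ≤ d := hc.trans hcd
  have hdsa : IsSelfAdjoint d := .of_nonneg hd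
  set sc := CFC.sqrt c with hsc
  have hsc0 : 0 ≤ sc := CFC.sqrt_nonneg _
  have hscsa : IsSelfAdjoint sc := .of_nonneg hsc0
  have hsqc : sc * sc = c := CFC.sqrt_mul_sqrt_self c hc
  apply cuntz_of_forall
  intro η hη
  set μ := 4 * (η / (‖sc‖ + 1)) ^ 2 with hμdef
  have hμ : 0 < μ := by positivity
  have hsqrtμ : Real.sqrt (μ / 4) = η / (‖sc‖ + 1) := by
    rw [hμdef, show 4 * (η / (‖sc‖ + 1)) ^ 2 / 4 = (η / (‖sc‖ + 1)) ^ 2 by ring]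
    exact Real.sqrt_sq (by positivity)
  clear_value μ
  clear hμdef
  set f := fun t : ℝ => (Real.sqrt (max t 0 + μ))⁻¹ with hfdef
  have hf : Continuous f := by
    apply Continuous.inv₀
    · exact Real.continuous_sqrt.comp ((continuous_id.max continuous_const).add continuous_const)
    · intro x
      refine ne_of_gt (Real.sqrt_pos.2 ?_)
      have := le_max_right x 0
      positivity
  have hfsa : IsSelfAdjoint (cfc f d) := cfc_predicate f d
  refine ⟨sc * cfc f d, ?_⟩
  set e := cfc (fun t => f t * t * f t) d with he
  have hesa : IsSelfAdjoint e := cfc_predicate _ d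
  have he' : e = cfc f d * d * cfc f d := by
    rw [he, cfc_conj_eq hdsa f (fun t => t) hf continuous_id, cfc_id' ℝ d hdsa]
  have hstar : star (sc * cfc f d) = cfc f d * sc := by
    rw [StarMul.star_mul, hscsa.star_eq, hfsa.star_eq]
  have hval : sc * cfc f d * d * star (sc * cfc f d) - c = sc * (e - 1) * sc := by
    rw [hstar, he', hsqc.symm]
    simp only [mul_sub, sub_mul, mul_one, one_mul, mul_assoc]
  -- norm estimates
  have hem : e - 1 = cfc (fun t => f t * t * f t - 1) d := by
    rw [he, cfc_sub (fun t => f t * t * f t) (fun _ : ℝ => 1) d (by fun_prop) (by fun_prop),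
      cfc_const 1 d hdsa, _root_.map_one]
  have hemsa : IsSelfAdjoint (e - 1) := hem ▸ cfc_predicate _ d
  have hconj : (e - 1) * d * (e - 1)
      = cfc (fun t => (f t * t * f t - 1) * t * (f t * t * f t - 1)) d := by
    rw [cfc_conj_eq hdsa _ (fun t => t) (by fun_prop) continuous_id, cfc_id' ℝ d hdsa, ← hem]
  have hbound : ‖(e - 1) * d * (e - 1)‖ ≤ μ / 4 := by
    rw [hconj]
    refine norm_cfc_le (by positivity) fun x hx => ?_
    have hx0 : 0 ≤ x := spectrum_nonneg_of_nonneg hd hx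
    have hmax : max x 0 = x := max_eq_left hx0
    set s := Real.sqrt (x + μ) with hs
    have hs2 : s * s = x + μ := Real.mul_self_sqrt (by positivity)
    have hspos : 0 < s := Real.sqrt_pos.2 (by positivity)
    have hfx : f x = s⁻¹ := by rw [hfdef]; simp [hmax, hs]
    have hfx2 : f x * x * f x = x / (x + μ) := by
      rw [hfx, ← hs2]
      field_simp
    have hval2 : f x * x * f x - 1 = -μ / (x + μ) := by
      rw [hfx2]
      field_simp
      ring
    rw [hval2, Real.norm_eq_abs]
    have h4 : (-μ / (x + μ)) * x * (-μ / (x + μ)) = μ ^ 2 * x / (x + μ) ^ 2 := by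
      field_simp
    rw [h4, abs_of_nonneg (by positivity)]
    rw [div_le_div_iff₀ (by positivity) (by norm_num)]
    nlinarith [sq_nonneg (x - μ), sq_nonneg (x + μ), hμ.le, hx0]
  have hcc : 0 ≤ (e - 1) * c * (e - 1) := by
    have := star_left_conjugate_nonneg hc (e - 1)
    rwa [hemsa.star_eq] at this
  have hcd2 : (e - 1) * c * (e - 1) ≤ (e - 1) * d * (e - 1) := by
    have := star_left_conjugate_le_conjugate hcd (e - 1)
    rwa [hemsa.star_eq] at this
  have hnormc : ‖(e - 1) * c * (e - 1)‖ ≤ μ / 4 :=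
    le_trans (CStarAlgebra.norm_le_norm_of_nonneg_of_le hcc hcd2) hbound
  have hxx : ((e - 1) * sc) * star ((e - 1) * sc) = (e - 1) * c * (e - 1) := by
    rw [StarMul.star_mul, hscsa.star_eq, hemsa.star_eq, ← hsqc]
    simp only [mul_assoc]
  have hns : ‖(e - 1) * sc‖ ≤ Real.sqrt (μ / 4) := by
    have h5 : ‖(e - 1) * sc‖ * ‖(e - 1) * sc‖ ≤ μ / 4 := by
      rw [← CStarRing.norm_self_mul_star, hxx]; exact hnormc
    nlinarith [norm_nonneg ((e - 1) * sc), Real.sq_sqrt (by positivity : (0:ℝ) ≤ μ / 4),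
      Real.sqrt_nonneg (μ / 4)]
  calc ‖sc * cfc f d * d * star (sc * cfc f d) - c‖ = ‖sc * ((e - 1) * sc)‖ := by
        rw [hval, mul_assoc]
    _ ≤ ‖sc‖ * ‖(e - 1) * sc‖ := norm_mul_le _ _
    _ ≤ ‖sc‖ * (η / (‖sc‖ + 1)) := by
        refine mul_le_mul_of_nonneg_left ?_ (norm_nonneg _)
        rw [← hsqrtμ]; exact hns
    _ ≤ η := by
        rw [div_eq_inv_mul, ← mul_assoc]
        have h6 : ‖sc‖ * (‖sc‖ + 1)⁻¹ ≤ 1 := by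
          rw [mul_inv_le_iff₀ (by positivity), one_mul]
          linarith
        nlinarith [hη.le]

/-- Master lemma: if every cut-down of `c` is dominated by a conjugate of `d`, then `c ≾ d`. -/
lemma subequiv_of_cutDown_le {c d : A} (hc : 0 ≤ c)
    (H : ∀ δ : ℝ, 0 < δ → ∃ u : A, cutDown c δ ≤ u * d * star u) :
    CuntzSubequiv A c d := by
  apply cuntz_of_forall
  intro η hη
  obtain ⟨u, hu⟩ := H (η / 2) (by positivity)
  obtain ⟨v, hv⟩ := cuntz_forall (subequiv_of_le (cutDown_nonneg c (η / 2)) hu) (η / 2)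
    (by positivity)
  refine ⟨v * u, ?_⟩
  have h1 : v * u * d * star (v * u) = v * (u * d * star u) * star v := by
    rw [StarMul.star_mul]; simp only [mul_assoc]
  rw [h1]
  calc ‖v * (u * d * star u) * star v - c‖
      ≤ ‖v * (u * d * star u) * star v - cutDown c (η / 2)‖ + ‖cutDown c (η / 2) - c‖ := by
        simpa [dist_eq_norm] using dist_triangle (v * (u * d * star u) * star v)
          (cutDown c (η / 2)) c
    _ ≤ η / 2 + η / 2 := add_le_add hv (norm_cutDown_sub_le hc (by positivity))
    _ = η := by ring

lemma cutDown_cutDown {a : A} (ha : 0 ≤ a) {ε δ : ℝ} (hδ : 0 < δ) :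
    cutDown (cutDown a ε) δ = cfc (fun t : ℝ => max (t - ε - δ) 0) a := by
  have hsa : IsSelfAdjoint a := .of_nonneg ha
  rw [cutDown, cutDown, ← cfc_comp (fun t : ℝ => max (t - δ) 0) (fun t : ℝ => max (t - ε) 0) a hsa
    (by fun_prop) (by fun_prop)]
  exact cfc_congr fun x _ => by simp only [Function.comp_apply]; exact rmax1 hδ (x - ε)


/-! ### The three comparison steps -/

lemma app1 {a y z : A} (ha : 0 ≤ a) (hy : 0 ≤ y) (hz : 0 ≤ z) (hyz : y + z = a)
    {ε : ℝ} (hε : 0 < ε) :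
    CuntzSubequiv A (cutDown a ε) (cutDown y ε + z) := by
  have hasa : IsSelfAdjoint a := .of_nonneg ha
  have hysa : IsSelfAdjoint y := .of_nonneg hy
  apply subequiv_of_cutDown_le (cutDown_nonneg a ε)
  intro δ hδ
  set e := fun t : ℝ => Real.sqrt (max (t - ε - δ) 0 / max (t - ε) δ) with hedef
  have he : Continuous e := by
    apply Real.continuous_sqrt.comp
    exact Continuous.div (by fun_prop) (by fun_prop)
      (fun t => ne_of_gt (lt_of_lt_of_le hδ (le_max_right _ _)))
  have hesa : IsSelfAdjoint (cfc e a) := cfc_predicate e a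
  refine ⟨cfc e a, ?_⟩
  have hstep1 : cutDown (cutDown a ε) δ = cfc e a * (a - algebraMap ℝ A ε) * cfc e a := by
    rw [cutDown_cutDown ha hδ,
      cfc_congr (g := fun t : ℝ => e t * (t - ε) * e t) (fun t _ => (rid1 hδ t).symm),
      cfc_conj_eq hasa e (fun t => t - ε) he (by fun_prop),
      cfc_sub (fun t : ℝ => t) (fun _ : ℝ => ε) a (by fun_prop) (by fun_prop),
      cfc_id' ℝ a hasa, cfc_const ε a hasa]
  have hstep2 : a - algebraMap ℝ A ε ≤ cutDown y ε + z := by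
    have h3 : a - algebraMap ℝ A ε = (y - algebraMap ℝ A ε) + z := by rw [← hyz]; abel
    rw [h3]
    exact add_le_add_left (sub_algebraMap_le_cutDown hysa ε) z
  rw [hstep1]
  calc cfc e a * (a - algebraMap ℝ A ε) * cfc e a
      ≤ cfc e a * (cutDown y ε + z) * cfc e a := hesa.conjugate_le_conjugate hstep2
    _ = cfc e a * (cutDown y ε + z) * star (cfc e a) := by rw [hesa.star_eq]

lemma app2 (x : A) {ε : ℝ} (hε : 0 < ε) :
    CuntzSubequiv A (cutDown (star x * x) ε) (cutDown (x * star x) ε) := by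
  set y := star x * x with hydef
  set b := x * star x with hbdef
  have hy : 0 ≤ y := star_mul_self_nonneg x
  have hb : 0 ≤ b := mul_star_self_nonneg x
  have hysa : IsSelfAdjoint y := .of_nonneg hy
  have hbsa : IsSelfAdjoint b := .of_nonneg hb
  apply subequiv_of_cutDown_le (cutDown_nonneg y ε)
  intro δ hδ
  set h := fun t : ℝ => Real.sqrt (max (t - ε - δ) 0 / max (t * (t - ε)) ((ε + δ) * δ))
    with hhdef
  have hh : Continuous h := by
    apply Real.continuous_sqrt.comp
    exact Continuous.div (by fun_prop) (by fun_prop)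
      (fun t => ne_of_gt (lt_of_lt_of_le (by positivity) (le_max_right _ _)))
  have hhsa : IsSelfAdjoint (cfc h y) := cfc_predicate h y
  refine ⟨cfc h y * star x, ?_⟩
  have hmid : cfc (fun t : ℝ => t * t - ε * t) y = star x * (b - algebraMap ℝ A ε) * x := by
    rw [cfc_sub (fun t : ℝ => t * t) (fun t : ℝ => ε * t) y (by fun_prop) (by fun_prop),
      cfc_mul (fun t : ℝ => t) (fun t : ℝ => t) y (by fun_prop) (by fun_prop),
      cfc_id' ℝ y hysa, cfc_const_mul_id ε y hysa]
    rw [Algebra.algebraMap_eq_smul_one, mul_sub, sub_mul, mul_smul_comm, smul_mul_assoc,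
      mul_one, hbdef, hydef]
    simp only [mul_assoc]
  have hstep1 : cutDown (cutDown y ε) δ = cfc h y * (star x * (b - algebraMap ℝ A ε) * x)
      * cfc h y := by
    rw [cutDown_cutDown hy hδ,
      cfc_congr (g := fun t : ℝ => h t * (t * t - ε * t) * h t) (fun t _ => (rid2 hε hδ t).symm),
      cfc_conj_eq hysa h (fun t => t * t - ε * t) hh (by fun_prop), hmid]
  have hstep2 : star x * (b - algebraMap ℝ A ε) * x ≤ star x * cutDown b ε * x :=
    star_left_conjugate_le_conjugate (sub_algebraMap_le_cutDown hbsa ε) x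
  have hstep3 := hhsa.conjugate_le_conjugate hstep2
  rw [hstep1]
  refine le_of_le_of_eq hstep3 ?_
  rw [StarMul.star_mul, star_star, hhsa.star_eq]
  simp only [mul_assoc]

lemma app3 {w g : A} (hg : 0 ≤ g) {lam : ℝ} (hlam : 0 ≤ lam)
    (hbound : w * star w ≤ lam • g) :
    CuntzSubequiv A (star w * w) g := by
  set z := star w * w with hzdef
  have hz : 0 ≤ z := star_mul_self_nonneg w
  have hzsa : IsSelfAdjoint z := .of_nonneg hz
  apply subequiv_of_cutDown_le hz
  intro δ hδ
  set h := fun t : ℝ => Real.sqrt (max (t - δ) 0 / max (t * t) (δ * δ)) with hhdef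
  have hh : Continuous h := by
    apply Real.continuous_sqrt.comp
    exact Continuous.div (by fun_prop) (by fun_prop)
      (fun t => ne_of_gt (lt_of_lt_of_le (by positivity) (le_max_right _ _)))
  have hhsa : IsSelfAdjoint (cfc h z) := cfc_predicate h z
  refine ⟨Real.sqrt lam • (cfc h z * star w), ?_⟩
  have hmid : cfc (fun t : ℝ => t * t) z = star w * (w * star w) * w := by
    rw [cfc_mul (fun t : ℝ => t) (fun t : ℝ => t) z (by fun_prop) (by fun_prop),
      cfc_id' ℝ z hzsa, hzdef]
    simp only [mul_assoc]
  have hstep1 : cutDown z δ = cfc h z * (star w * (w * star w) * w) * cfc h z := by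
    rw [cutDown,
      cfc_congr (g := fun t : ℝ => h t * (t * t) * h t) (fun t _ => (rid3 hδ t).symm),
      cfc_conj_eq hzsa h (fun t => t * t) hh (by fun_prop), hmid]
  have hstep2 : star w * (w * star w) * w ≤ star w * (lam • g) * w :=
    star_left_conjugate_le_conjugate hbound w
  have hstep3 := hhsa.conjugate_le_conjugate hstep2
  rw [hstep1]
  refine le_of_le_of_eq hstep3 ?_
  have hstaru : star (Real.sqrt lam • (cfc h z * star w)) = Real.sqrt lam • (w * cfc h z) := by
    rw [star_smul, StarMul.star_mul, star_star, hhsa.star_eq]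
    simp
  have hlhs : cfc h z * (star w * (lam • g) * w) * cfc h z
      = lam • (cfc h z * (star w * g * w) * cfc h z) := by
    simp only [mul_smul_comm, smul_mul_assoc]
  rw [hlhs, hstaru]
  simp only [smul_mul_assoc, mul_smul_comm, smul_smul, Real.mul_self_sqrt hlam, mul_assoc]

/-! ### Assembly into `M₂(A)` -/

lemma combine {c₀ e₁ e₂ d₁ d₂ : A}
    (h1 : CuntzSubequiv A c₀ (e₁ + e₂)) (h2 : CuntzSubequiv A e₁ d₁)
    (h3 : CuntzSubequiv A e₂ d₂) :
    CuntzSubequiv (Matrix (Fin 2) (Fin 2) A) (Matrix.diagonal ![c₀, 0])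
      (Matrix.diagonal ![d₁, d₂]) := by
  have key : ∀ η : ℝ, 0 < η →
      ∃ r s : A, ‖r * d₁ * star r + s * d₂ * star s - c₀‖ ≤ η := by
    intro η hη
    obtain ⟨u, hu⟩ := cuntz_forall h1 (η / 2) (by positivity)
    obtain ⟨v, hv⟩ := cuntz_forall h2 (η / (4 * (‖u‖ ^ 2 + 1))) (by positivity)
    obtain ⟨w, hw⟩ := cuntz_forall h3 (η / (4 * (‖u‖ ^ 2 + 1))) (by positivity)
    refine ⟨u * v, u * w, ?_⟩
    have expand : u * v * d₁ * star (u * v) + u * w * d₂ * star (u * w) - c₀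
        = u * (v * d₁ * star v - e₁) * star u + u * (w * d₂ * star w - e₂) * star u
          + (u * (e₁ + e₂) * star u - c₀) := by
      simp only [StarMul.star_mul, mul_sub, sub_mul, mul_add, add_mul, mul_assoc]
      abel
    have hnorm : ∀ X : A, ∀ C : ℝ, ‖X‖ ≤ C → ‖u * X * star u‖ ≤ ‖u‖ ^ 2 * C := by
      intro X C hX
      calc ‖u * X * star u‖ ≤ ‖u * X‖ * ‖star u‖ := norm_mul_le _ _
        _ ≤ ‖u‖ * ‖X‖ * ‖star u‖ :=
            mul_le_mul_of_nonneg_right (norm_mul_le _ _) (norm_nonneg _)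
        _ = ‖u‖ ^ 2 * ‖X‖ := by rw [norm_star]; ring
        _ ≤ ‖u‖ ^ 2 * C := mul_le_mul_of_nonneg_left hX (by positivity)
    have hb1 := hnorm _ _ hv
    have hb2 := hnorm _ _ hw
    have hfrac : ‖u‖ ^ 2 * (η / (4 * (‖u‖ ^ 2 + 1))) ≤ η / 4 := by
      rw [show ‖u‖ ^ 2 * (η / (4 * (‖u‖ ^ 2 + 1))) = ‖u‖ ^ 2 * η / (4 * (‖u‖ ^ 2 + 1)) from by
        ring]
      rw [div_le_div_iff₀ (by positivity) (by norm_num)]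
      nlinarith [sq_nonneg ‖u‖, hη.le]
    rw [expand]
    calc ‖u * (v * d₁ * star v - e₁) * star u + u * (w * d₂ * star w - e₂) * star u
          + (u * (e₁ + e₂) * star u - c₀)‖
        ≤ ‖u * (v * d₁ * star v - e₁) * star u + u * (w * d₂ * star w - e₂) * star u‖
          + ‖u * (e₁ + e₂) * star u - c₀‖ := norm_add_le _ _
      _ ≤ ‖u * (v * d₁ * star v - e₁) * star u‖ + ‖u * (w * d₂ * star w - e₂) * star u‖
          + ‖u * (e₁ + e₂) * star u - c₀‖ := by
            exact add_le_add_left (norm_add_le _ _) _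
      _ ≤ η / 4 + η / 4 + η / 2 := by
            exact add_le_add (add_le_add (hb1.trans hfrac) (hb2.trans hfrac)) hu
      _ = η := by ring
  choose r s hrs using fun n : ℕ => key (1 / ((n : ℝ) + 1)) (by positivity)
  have hf : Tendsto (fun n => r n * d₁ * star (r n) + s n * d₂ * star (s n)) atTop (𝓝 c₀) := by
    rw [tendsto_iff_norm_sub_tendsto_zero]
    exact squeeze_zero (fun n => norm_nonneg _) hrs tendsto_one_div_add_atTop_nhds_zero_nat
  refine ⟨fun n => !![r n, s n; 0, 0], ?_⟩
  have hdiag : (Matrix.diagonal ![d₁, d₂] : Matrix (Fin 2) (Fin 2) A) = !![d₁, 0; 0, d₂] := by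
    ext i j; fin_cases i <;> fin_cases j <;> simp
  have hmat : ∀ n, !![r n, s n; 0, 0] * Matrix.diagonal ![d₁, d₂] * star !![r n, s n; 0, 0]
      = !![r n * d₁ * star (r n) + s n * d₂ * star (s n), 0; 0, 0] := by
    intro n
    rw [hdiag]
    ext i j
    rw [Matrix.star_eq_conjTranspose]
    fin_cases i <;> fin_cases j <;>
      simp [Matrix.mul_apply, Fin.sum_univ_two, mul_assoc]
  simp only [hmat]
  apply tendsto_pi_nhds.2
  intro i
  rw [tendsto_pi_nhds]
  intro j
  fin_cases i <;> fin_cases j <;> simp [Matrix.diagonal] <;>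
    first
      | exact hf
      | exact tendsto_const_nhds

end CuntzAux

open CuntzAux in
/-- Lemma 1.8: for `a ≥ 0`, `0 ≤ g ≤ 1` and `ε > 0`, the element `(a - ε)₊` is Cuntz
subequivalent in `M₂(A)` to `diag ([(1-g) a (1-g) - ε]₊, g)`. -/
theorem cutDown_subequiv_diag {A : Type*} [CStarAlgebra A]
    [PartialOrder A] [StarOrderedRing A]
    (a g : A) (ha : 0 ≤ a) (hg0 : 0 ≤ g) (hg1 : g ≤ 1) (ε : ℝ) (hε : 0 < ε) :
    CuntzSubequiv (Matrix (Fin 2) (Fin 2) A)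
      (Matrix.diagonal ![cutDown a ε, 0])
      (Matrix.diagonal ![cutDown ((1 - g) * a * (1 - g)) ε, g]) := by
  have hasa : IsSelfAdjoint a := .of_nonneg ha
  set sa := CFC.sqrt a with hsadef
  have hsa0 : 0 ≤ sa := CFC.sqrt_nonneg _
  have hsasa : IsSelfAdjoint sa := .of_nonneg hsa0
  have hsqa : sa * sa = a := CFC.sqrt_mul_sqrt_self a ha
  set r := 1 - g with hrdef
  have hr0 : 0 ≤ r := sub_nonneg.2 hg1
  have hrsa : IsSelfAdjoint r := .of_nonneg hr0
  set x := r * sa with hxdef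
  have hxstar : star x = sa * r := by rw [hxdef, StarMul.star_mul, hsasa.star_eq, hrsa.star_eq]
  have hb : x * star x = (1 - g) * a * (1 - g) := by
    rw [hxstar, hxdef, ← hrdef, ← hsqa]
    simp only [mul_assoc]
  -- the element p = 1 - r² = 2g - g²
  set p := 1 - r * r with hpdef
  have hgg0 : (0 : A) ≤ g * g := by
    have h := star_mul_self_nonneg g
    rwa [(IsSelfAdjoint.of_nonneg hg0).star_eq] at h
  have hp_eq : p = g + g - g * g := by rw [hpdef, hrdef]; noncomm_ring
  have hp2g : p ≤ (2 : ℝ) • g := by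
    rw [hp_eq, two_smul]
    calc g + g - g * g ≤ g + g - 0 := by exact sub_le_sub_left hgg0 _
      _ = g + g := by rw [sub_zero]
  have hp0 : 0 ≤ p := by
    set sg := CFC.sqrt g with hsgdef
    have hsg0 : 0 ≤ sg := CFC.sqrt_nonneg _
    have hsgsa : IsSelfAdjoint sg := .of_nonneg hsg0
    have hsqg : sg * sg = g := CFC.sqrt_mul_sqrt_self g hg0
    have hgsq : sg * g * sg = g * g := by rw [← hsqg]; simp only [mul_assoc]
    have h2 : (0 : A) ≤ (1 : A) + 1 - g :=
      sub_nonneg.2 (hg1.trans (le_add_of_nonneg_right zero_le_one))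
    have hconj := star_left_conjugate_nonneg h2 sg
    rw [hsgsa.star_eq] at hconj
    have hcalc : sg * ((1 : A) + 1 - g) * sg = p := by
      have h3 : sg * ((1 : A) + 1 - g) * sg = sg * sg + sg * sg - sg * g * sg := by noncomm_ring
      rw [h3, hsqg, hgsq, hp_eq]
    rwa [hcalc] at hconj
  set sp := CFC.sqrt p with hspdef
  have hsp0 : 0 ≤ sp := CFC.sqrt_nonneg _
  have hspsa : IsSelfAdjoint sp := .of_nonneg hsp0
  have hsqp : sp * sp = p := CFC.sqrt_mul_sqrt_self p hp0
  set w := sp * sa with hwdef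
  have hwstar : star w = sa * sp := by rw [hwdef, StarMul.star_mul, hsasa.star_eq, hspsa.star_eq]
  have hz_eq : star w * w = sa * p * sa := by
    rw [hwstar, hwdef, ← hsqp]
    simp only [mul_assoc]
  have hy_eq : star x * x = sa * (r * r) * sa := by
    rw [hxstar, hxdef]
    simp only [mul_assoc]
  have hz0 : 0 ≤ sa * p * sa := by
    have h := star_left_conjugate_nonneg hp0 sa
    rwa [hsasa.star_eq] at h
  have hy0 : 0 ≤ star x * x := star_mul_self_nonneg x
  have hyz : star x * x + sa * p * sa = a := by
    have h5 : r * r + p = 1 := by rw [hpdef]; noncomm_ring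
    have h6 : sa * (r * r) * sa + sa * p * sa = sa * (r * r + p) * sa := by noncomm_ring
    rw [hy_eq, h6, h5, mul_one, hsqa]
  -- bound for app3
  have hwbound : w * star w ≤ (‖a‖ * 2) • g := by
    have h7 : w * star w = sp * a * sp := by
      rw [hwstar, hwdef, ← hsqa]
      simp only [mul_assoc]
    have h8 : star sp * a * sp ≤ ‖a‖ • (star sp * sp) := CStarAlgebra.star_left_conjugate_le_norm_smul hasa
    rw [hspsa.star_eq, hsqp] at h8
    calc w * star w = sp * a * sp := h7
      _ ≤ ‖a‖ • p := h8
      _ ≤ ‖a‖ • ((2 : ℝ) • g) := smul_le_smul_of_nonneg_left hp2g (norm_nonneg a)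
      _ = (‖a‖ * 2) • g := by rw [smul_smul]
  -- the three subequivalences
  have h1 : CuntzSubequiv A (cutDown a ε) (cutDown (star x * x) ε + sa * p * sa) :=
    CuntzAux.app1 ha hy0 hz0 hyz hε
  have h2 : CuntzSubequiv A (cutDown (star x * x) ε) (cutDown ((1 - g) * a * (1 - g)) ε) := by
    have := CuntzAux.app2 x hε
    rwa [hb] at this
  have h3 : CuntzSubequiv A (sa * p * sa) g := by
    have := CuntzAux.app3 hg0 (by positivity : (0:ℝ) ≤ ‖a‖ * 2) hwbound
    rwa [hz_eq] at this
  exact CuntzAux.combine h1 h2 h3
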